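/- Every circuit of the matching graph of a picture in DC₁, when traversed starting from a node labeled a and alternating row and column edges, yields a label sequence in the language (a b d c)⁺; in particular every circuit has length divisible by 4. -/

import Mathlib

/-- The alphabet Δ₁ = {a, b, c, d}. -/
inductive Del : Type
  | a | b | c | d
deriving DecidableEq

/-- Row cancellation: pairs [a,b] and [c,d]. -/
def rowStep (w w' : List Del) : Prop :=
  ∃ (u v : List Del),
    (w = u ++ [Del.a, Del.b] ++ v ∨ w = u ++ [Del.c, Del.d] ++ v) ∧ w' = u ++ v

/-- The row Dyck language D^Row. -/
def DRow (w : List Del) : Prop := Relation.ReflTransGen rowStep w []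

/-- Column cancellation: pairs [a,c] and [b,d]. -/
def colStep (w w' : List Del) : Prop :=
  ∃ (u v : List Del),
    (w = u ++ [Del.a, Del.c] ++ v ∨ w = u ++ [Del.b, Del.d] ++ v) ∧ w' = u ++ v

/-- The column Dyck language D^Col. -/
def DCol (w : List Del) : Prop := Relation.ReflTransGen colStep w []

/-- Row i (of length n) of a picture. -/
def row (p : ℕ → ℕ → Del) (n i : ℕ) : List Del := (List.range n).map (p i)

/-- Column j (of length m) of a picture. -/
def col (p : ℕ → ℕ → Del) (m j : ℕ) : List Del :=
  (List.range m).map (fun i => p i j)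

/-- The Dyck crossword language DC₁: nonempty pictures all of whose rows
are in D^Row and all of whose columns are in D^Col. -/
def DC (m n : ℕ) (p : ℕ → ℕ → Del) : Prop :=
  1 ≤ m ∧ 1 ≤ n ∧ (∀ i < m, DRow (row p n i)) ∧ (∀ j < n, DCol (col p m j))

/-- Positions `j < j'` match in a row word: the letters form a row matching
pair ([a,b] or [c,d]) and the factor strictly between them is in D^Row. -/
def rowMatchW (w : List Del) (j j' : ℕ) : Prop :=
  j < j' ∧ j' < w.length ∧
    ((w[j]? = some Del.a ∧ w[j']? = some Del.b) ∨
      (w[j]? = some Del.c ∧ w[j']? = some Del.d)) ∧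
    DRow ((w.drop (j + 1)).take (j' - (j + 1)))

/-- Positions `i < i'` match in a column word: the letters form a column
matching pair ([a,c] or [b,d]) and the factor strictly between them is in
D^Col. -/
def colMatchW (w : List Del) (i i' : ℕ) : Prop :=
  i < i' ∧ i' < w.length ∧
    ((w[i]? = some Del.a ∧ w[i']? = some Del.c) ∨
      (w[i]? = some Del.b ∧ w[i']? = some Del.d)) ∧
    DCol ((w.drop (i + 1)).take (i' - (i + 1)))

/-- Row edge of the matching graph of picture `p` (of size m×n) between cells
`u` and `v`: same row, matched positions (in either order). -/
def rowEdge (p : ℕ → ℕ → Del) (n : ℕ) (u v : ℕ × ℕ) : Prop :=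
  u.1 = v.1 ∧ (rowMatchW (row p n u.1) u.2 v.2 ∨ rowMatchW (row p n u.1) v.2 u.2)

/-- Column edge of the matching graph between cells `u` and `v`. -/
def colEdge (p : ℕ → ℕ → Del) (m : ℕ) (u v : ℕ × ℕ) : Prop :=
  u.2 = v.2 ∧ (colMatchW (col p m u.2) u.1 v.1 ∨ colMatchW (col p m u.2) v.1 u.1)

/-- Adjacency in the matching graph. -/
def adj (p : ℕ → ℕ → Del) (m n : ℕ) (u v : ℕ × ℕ) : Prop :=
  rowEdge p n u v ∨ colEdge p m u v


/-- Label of the k-th node of the circuit: a, b, d, c cyclically. -/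
def lab : ℕ → Del := fun k =>
  match k % 4 with
  | 0 => Del.a
  | 1 => Del.b
  | 2 => Del.d
  | _ => Del.c

lemma row_get (p : ℕ → ℕ → Del) (r n j : ℕ) (hj : j < n) :
    (row p n r)[j]? = some (p r j) := by
  simp [row, List.getElem?_range hj]

lemma col_get (p : ℕ → ℕ → Del) (m i j : ℕ) (hi : i < m) :
    (col p m j)[i]? = some (p i j) := by
  simp [col, List.getElem?_range hi]

lemma rowEdge_pair {p : ℕ → ℕ → Del} {n : ℕ} {u v : ℕ × ℕ}
    (h : rowEdge p n u v) :
    (p u.1 u.2 = Del.a ∧ p v.1 v.2 = Del.b) ∨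
    (p u.1 u.2 = Del.b ∧ p v.1 v.2 = Del.a) ∨
    (p u.1 u.2 = Del.c ∧ p v.1 v.2 = Del.d) ∨
    (p u.1 u.2 = Del.d ∧ p v.1 v.2 = Del.c) := by
  obtain ⟨he, hm | hm⟩ := h <;>
  · obtain ⟨hlt, hlen, hcase, -⟩ := hm
    have hn : (row p n u.1).length = n := by simp [row]
    rw [hn] at hlen
    rw [row_get p u.1 n _ (lt_trans hlt hlen), row_get p u.1 n _ hlen] at hcase
    rw [← he] at *
    rcases hcase with ⟨h1, h2⟩ | ⟨h1, h2⟩ <;>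
      simp only [Option.some.injEq] at h1 h2 <;> tauto

lemma colEdge_pair {p : ℕ → ℕ → Del} {m : ℕ} {u v : ℕ × ℕ}
    (h : colEdge p m u v) :
    (p u.1 u.2 = Del.a ∧ p v.1 v.2 = Del.c) ∨
    (p u.1 u.2 = Del.c ∧ p v.1 v.2 = Del.a) ∨
    (p u.1 u.2 = Del.b ∧ p v.1 v.2 = Del.d) ∨
    (p u.1 u.2 = Del.d ∧ p v.1 v.2 = Del.b) := by
  obtain ⟨he, hm | hm⟩ := h <;>
  · obtain ⟨hlt, hlen, hcase, -⟩ := hm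
    have hn : (col p m u.2).length = m := by simp [col]
    rw [hn] at hlen
    rw [col_get p m _ _ (lt_trans hlt hlen), col_get p m _ _ hlen] at hcase
    rw [← he] at *
    rcases hcase with ⟨h1, h2⟩ | ⟨h1, h2⟩ <;>
      simp only [Option.some.injEq] at h1 h2 <;> tauto

lemma flatten_replicate_get (t k : ℕ) (hk : k < 4 * t) :
    ((List.replicate t [Del.a, Del.b, Del.d, Del.c]).flatten)[k]?
      = some (lab k) := by
  induction t generalizing k with
  | zero => omega
  | succ t ih =>
    rw [List.replicate_succ, List.flatten_cons]
    by_cases h4 : k < 4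
    · rw [List.getElem?_append_left (by simpa using h4)]
      interval_cases k <;> rfl
    · rw [List.getElem?_append_right (by simpa using h4)]
      have : k - 4 < 4 * t := by omega
      have := ih (k - 4) this
      simp only [List.length_cons, List.length_nil] at *
      have hl : lab (k - 4) = lab k := by
        unfold lab
        have : (k - 4) % 4 = k % 4 := by omega
        rw [this]
      rw [show k - (0+1+1+1+1) = k - 4 by omega, this, hl]

/-- Traversing any circuit of the matching graph of a DC₁ picture, starting
from a node labeled `a` and alternating row and column edges, yields a label
sequence in (a b d c)⁺; in particular the circuit length is divisible by 4. -/
theorem circuit_labels_abdc (m n : ℕ) (p : ℕ → ℕ → Del) (h : DC m n p)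
    (L : List (ℕ × ℕ)) (hne : L ≠ []) (hnd : L.Nodup)
    (hstart : p (L.getD 0 (0, 0)).1 (L.getD 0 (0, 0)).2 = Del.a)
    (halt : ∀ k < L.length,
      if k % 2 = 0 then
        rowEdge p n (L.getD k (0, 0)) (L.getD ((k + 1) % L.length) (0, 0))
      else
        colEdge p m (L.getD k (0, 0)) (L.getD ((k + 1) % L.length) (0, 0))) :
    ∃ t : ℕ, 0 < t ∧ L.length = 4 * t ∧
      L.map (fun u => p u.1 u.2) =
        (List.replicate t [Del.a, Del.b, Del.d, Del.c]).flatten := by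
  have hlen : 0 < L.length := List.length_pos_iff.mpr hne
  -- Step 1: labels are forced
  have hlab : ∀ k, k < L.length →
      p (L.getD k (0, 0)).1 (L.getD k (0, 0)).2 = lab k := by
    intro k
    induction k with
    | zero => intro _; simpa [lab] using hstart
    | succ k ih =>
      intro hk
      have hk' : k < L.length := Nat.lt_of_succ_lt hk
      have hl := ih hk'
      have he := halt k hk'
      rw [Nat.mod_eq_of_lt hk] at he
      have h4 : k % 4 = 0 ∨ k % 4 = 1 ∨ k % 4 = 2 ∨ k % 4 = 3 := by omega
      by_cases hp : k % 2 = 0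
      · rw [if_pos hp] at he
        have hpair := rowEdge_pair he
        rcases h4 with h4 | h4 | h4 | h4
        · have hl' : lab k = Del.a := by unfold lab; rw [h4]; rfl
          have ht : lab (k + 1) = Del.b := by
            unfold lab; rw [show (k + 1) % 4 = 1 by omega]; rfl
          rw [hl'] at hl; rw [ht]
          rcases hpair with ⟨h1, h2⟩ | ⟨h1, h2⟩ | ⟨h1, h2⟩ | ⟨h1, h2⟩ <;> simp_all
        · omega
        · have hl' : lab k = Del.d := by unfold lab; rw [h4]; rfl
          have ht : lab (k + 1) = Del.c := by
            unfold lab; rw [show (k + 1) % 4 = 3 by omega]; rfl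
          rw [hl'] at hl; rw [ht]
          rcases hpair with ⟨h1, h2⟩ | ⟨h1, h2⟩ | ⟨h1, h2⟩ | ⟨h1, h2⟩ <;> simp_all
        · omega
      · rw [if_neg hp] at he
        have hpair := colEdge_pair he
        rcases h4 with h4 | h4 | h4 | h4
        · omega
        · have hl' : lab k = Del.b := by unfold lab; rw [h4]; rfl
          have ht : lab (k + 1) = Del.d := by
            unfold lab; rw [show (k + 1) % 4 = 2 by omega]; rfl
          rw [hl'] at hl; rw [ht]
          rcases hpair with ⟨h1, h2⟩ | ⟨h1, h2⟩ | ⟨h1, h2⟩ | ⟨h1, h2⟩ <;> simp_all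
        · omega
        · have hl' : lab k = Del.c := by unfold lab; rw [h4]; rfl
          have ht : lab (k + 1) = Del.a := by
            unfold lab; rw [show (k + 1) % 4 = 0 by omega]; rfl
          rw [hl'] at hl; rw [ht]
          rcases hpair with ⟨h1, h2⟩ | ⟨h1, h2⟩ | ⟨h1, h2⟩ | ⟨h1, h2⟩ <;> simp_all
  -- Step 2: closure forces length divisible by 4
  have hlast : L.length - 1 < L.length := by omega
  have hewrap := halt (L.length - 1) hlast
  have hwrap : (L.length - 1 + 1) % L.length = 0 := by
    rw [Nat.sub_add_cancel hlen, Nat.mod_self]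
  rw [hwrap] at hewrap
  have hlablast := hlab (L.length - 1) hlast
  have hmod4 : L.length % 4 = 0 := by
    by_contra hmod
    have h4 : L.length % 4 = 1 ∨ L.length % 4 = 2 ∨ L.length % 4 = 3 := by omega
    rcases h4 with h4 | h4 | h4
    · have hp : (L.length - 1) % 2 = 0 := by omega
      rw [if_pos hp] at hewrap
      have hpair := rowEdge_pair hewrap
      have : lab (L.length - 1) = Del.a := by
        unfold lab; rw [show (L.length - 1) % 4 = 0 by omega]; rfl
      rw [this] at hlablast
      rcases hpair with ⟨h1, h2⟩ | ⟨h1, h2⟩ | ⟨h1, h2⟩ | ⟨h1, h2⟩ <;> simp_all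
    · have hp : ¬ (L.length - 1) % 2 = 0 := by omega
      rw [if_neg hp] at hewrap
      have hpair := colEdge_pair hewrap
      have : lab (L.length - 1) = Del.b := by
        unfold lab; rw [show (L.length - 1) % 4 = 1 by omega]; rfl
      rw [this] at hlablast
      rcases hpair with ⟨h1, h2⟩ | ⟨h1, h2⟩ | ⟨h1, h2⟩ | ⟨h1, h2⟩ <;> simp_all
    · have hp : (L.length - 1) % 2 = 0 := by omega
      rw [if_pos hp] at hewrap
      have hpair := rowEdge_pair hewrap
      have : lab (L.length - 1) = Del.d := by
        unfold lab; rw [show (L.length - 1) % 4 = 2 by omega]; rfl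
      rw [this] at hlablast
      rcases hpair with ⟨h1, h2⟩ | ⟨h1, h2⟩ | ⟨h1, h2⟩ | ⟨h1, h2⟩ <;> simp_all
  refine ⟨L.length / 4, by omega, by omega, ?_⟩
  have hlen4 : L.length = 4 * (L.length / 4) := by omega
  apply List.ext_getElem?
  intro k
  by_cases hk : k < L.length
  · rw [flatten_replicate_get _ k (by omega)]
    rw [List.getElem?_map]
    rw [List.getElem?_eq_getElem (by simpa using hk)]
    have := hlab k hk
    rw [List.getD_eq_getElem?_getD, List.getElem?_eq_getElem hk] at this
    simp only [Option.getD_some] at this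
    simp [this]
  · have h1 : (L.map fun u => p u.1 u.2)[k]? = none := by
      rw [List.getElem?_eq_none_iff]; simpa using not_lt.mp hk
    have h2 : ((List.replicate (L.length / 4) [Del.a, Del.b, Del.d, Del.c]).flatten)[k]? = none := by
      rw [List.getElem?_eq_none_iff]
      simp only [List.length_flatten, List.map_replicate, List.sum_replicate]
      simp only [List.length_cons, List.length_nil, smul_eq_mul]
      omega
    rw [h1, h2]
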